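/- Let Zρ_Z be a cq-state with ρ = ρ_Z, ρ_b = Σ_{z: f(z)=b} p(z)ρ_z for b ∈ {0,1}, and let M be the measurement that applies the Pretty Good Measurement and outputs f of the result. Then Pr[M(ρ_Z) = f(Z)] − Pr[M(ρ_Z) ≠ f(Z)] = Tr(ρ^{-1/2}(ρ_0 − ρ_1)ρ^{-1/2}(ρ_0 − ρ_1)), and in particular this quantity is nonnegative. -/

import Mathlib

open scoped Kronecker ComplexOrder
open Matrix BigOperators

/-- The square root of a positive semidefinite matrix (Mathlib's removed `Matrix.PosSemidef.sqrt`). -/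
noncomputable def Matrix.PosSemidef.sqrt {n : Type*} [Fintype n] [DecidableEq n] {A : Matrix n n ℂ}
    (hA : A.PosSemidef) : Matrix n n ℂ :=
  hA.1.eigenvectorUnitary.1 * diagonal ((↑) ∘ (√·) ∘ hA.1.eigenvalues) *
    (star hA.1.eigenvectorUnitary : Matrix n n ℂ)

lemma Matrix.PosSemidef.posSemidef_sqrt {n : Type*} [Fintype n] [DecidableEq n] {A : Matrix n n ℂ}
    (hA : A.PosSemidef) : hA.sqrt.PosSemidef := by
  unfold Matrix.PosSemidef.sqrt
  have h : (diagonal ((↑) ∘ (√·) ∘ hA.1.eigenvalues) : Matrix n n ℂ).PosSemidef := by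
    rw [posSemidef_diagonal_iff]
    intro i
    simp [Real.sqrt_nonneg]
  simpa [Matrix.star_eq_conjTranspose] using h.mul_mul_conjTranspose_same (hA.1.eigenvectorUnitary.1)

lemma Matrix.PosSemidef.sqrt_mul_self {n : Type*} [Fintype n] [DecidableEq n] {A : Matrix n n ℂ}
    (hA : A.PosSemidef) : hA.sqrt * hA.sqrt = A := by
  unfold Matrix.PosSemidef.sqrt
  set U := hA.1.eigenvectorUnitary with hU
  have hUU : (star U : Matrix n n ℂ) * U.1 = 1 := Unitary.coe_star_mul_self U
  have key : U.1 * diagonal ((↑) ∘ (√·) ∘ hA.1.eigenvalues) * (star U : Matrix n n ℂ) *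
      (U.1 * diagonal ((↑) ∘ (√·) ∘ hA.1.eigenvalues) * (star U : Matrix n n ℂ))
      = U.1 * (diagonal ((↑) ∘ (√·) ∘ hA.1.eigenvalues) * ((star U : Matrix n n ℂ) * U.1) *
        diagonal ((↑) ∘ (√·) ∘ hA.1.eigenvalues)) * (star U : Matrix n n ℂ) := by
    simp only [Matrix.mul_assoc]
  rw [key, hUU, Matrix.mul_one, diagonal_mul_diagonal]
  conv_rhs => rw [hA.1.spectral_theorem]
  rw [Unitary.conjStarAlgAut_apply]
  congr 3
  funext i
  simp only [Function.comp_apply]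
  rw [← Complex.ofReal_mul, Real.mul_self_sqrt (hA.eigenvalues_nonneg i)]
  rfl

/-- Schatten-1 norm `‖A‖₁ = Tr √(AᴴA)`. -/
noncomputable def trNorm {n m : Type*} [Fintype n] [Fintype m] [DecidableEq m] (A : Matrix n m ℂ) : ℝ :=
  ((Matrix.posSemidef_conjTranspose_mul_self A).sqrt.trace).re

/-- Trace distance `(1/2)‖A − B‖₁`. -/
noncomputable def trDist {n : Type*} [Fintype n] [DecidableEq n] (A B : Matrix n n ℂ) : ℝ :=
  (1/2) * trNorm (A - B)

/-- `ρ` is a density matrix. -/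
def IsDensity {n : Type*} [Fintype n] (ρ : Matrix n n ℂ) : Prop :=
  ρ.PosSemidef ∧ ρ.trace = 1

/-- The Pretty Good Measurement element `E_{z'} = p(z') ρ^{-1/2} ρ_{z'} ρ^{-1/2}`. -/
noncomputable def pgm {Z : Type*} [Fintype Z] {D : ℕ} (p : Z → ℝ)
    (ρ : Z → Matrix (Fin D) (Fin D) ℂ) (h : (∑ z, (p z : ℂ) • ρ z).PosDef) (z' : Z) :
    Matrix (Fin D) (Fin D) ℂ :=
  (p z' : ℂ) • ((h.posSemidef.sqrt)⁻¹ * ρ z' * (h.posSemidef.sqrt)⁻¹)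

private lemma re_trace_ctm_nonneg {D : ℕ} (C : Matrix (Fin D) (Fin D) ℂ) :
    0 ≤ ((Cᴴ * C).trace).re := by
  simp only [Matrix.trace, Matrix.diag, Matrix.mul_apply, Matrix.conjTranspose_apply]
  rw [Complex.re_sum]
  refine Finset.sum_nonneg fun i _ => ?_
  rw [Complex.re_sum]
  refine Finset.sum_nonneg fun j _ => ?_
  rw [Complex.star_def, ← Complex.normSq_eq_conj_mul_self, Complex.ofReal_re]
  exact Complex.normSq_nonneg _

private lemma expand_trace {Z : Type*} [Fintype Z] (D : ℕ) (S : Matrix (Fin D) (Fin D) ℂ)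
    (c : Z → ℝ) (ρ : Z → Matrix (Fin D) (Fin D) ℂ) :
    ((S * (∑ z, ((c z : ℝ) : ℂ) • ρ z) * S * (∑ z, ((c z : ℝ) : ℂ) • ρ z)).trace).re
      = ∑ z, ∑ z', (c z) * ((c z') * ((S * ρ z' * S * ρ z).trace).re) := by
  simp only [Matrix.mul_sum, Matrix.sum_mul, Matrix.mul_smul, Matrix.smul_mul,
    Matrix.trace_sum, Matrix.trace_smul, smul_eq_mul]
  simp [Complex.re_sum, Complex.mul_re, Finset.mul_sum]

/-- for the measurement `M` that applies the PGM and outputs `f` of the result,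
`Pr[M(ρ_Z) = f(Z)] − Pr[M(ρ_Z) ≠ f(Z)] = Tr(ρ^{-1/2}(ρ₀−ρ₁)ρ^{-1/2}(ρ₀−ρ₁))`, and in
particular this quantity is nonnegative. -/
theorem stmt11 {Z : Type*} [Fintype Z] [DecidableEq Z] (D : ℕ)
    (p : Z → ℝ) (hp : ∀ z, 0 ≤ p z) (hsum : ∑ z, p z = 1)
    (ρ : Z → Matrix (Fin D) (Fin D) ℂ) (hρ : ∀ z, IsDensity (ρ z))
    (f : Z → ZMod 2)
    (hpos : (∑ z, (p z : ℂ) • ρ z).PosDef) :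
    (∑ z, p z * ∑ z' ∈ Finset.univ.filter (fun z' => f z' = f z),
        ((pgm p ρ hpos z' * ρ z).trace).re)
      - (∑ z, p z * ∑ z' ∈ Finset.univ.filter (fun z' => f z' ≠ f z),
        ((pgm p ρ hpos z' * ρ z).trace).re)
      = (((hpos.posSemidef.sqrt)⁻¹ *
            ((∑ z ∈ Finset.univ.filter (fun z => f z = 0), (p z : ℂ) • ρ z)
              - ∑ z ∈ Finset.univ.filter (fun z => f z = 1), (p z : ℂ) • ρ z) *
          (hpos.posSemidef.sqrt)⁻¹ *
            ((∑ z ∈ Finset.univ.filter (fun z => f z = 0), (p z : ℂ) • ρ z)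
              - ∑ z ∈ Finset.univ.filter (fun z => f z = 1), (p z : ℂ) • ρ z)).trace).re
    ∧ 0 ≤ (∑ z, p z * ∑ z' ∈ Finset.univ.filter (fun z' => f z' = f z),
            ((pgm p ρ hpos z' * ρ z).trace).re)
          - (∑ z, p z * ∑ z' ∈ Finset.univ.filter (fun z' => f z' ≠ f z),
            ((pgm p ρ hpos z' * ρ z).trace).re) := by
  classical
  have hzm : ∀ a : ZMod 2, a = 0 ∨ a = 1 := by decide
  have h10 : (1 : ZMod 2) ≠ 0 := by decide
  set S : Matrix (Fin D) (Fin D) ℂ := (hpos.posSemidef.sqrt)⁻¹ with hSdef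
  set ε : Z → ℝ := fun z => if f z = 0 then 1 else -1 with hε
  set A : Matrix (Fin D) (Fin D) ℂ :=
    (∑ z ∈ Finset.univ.filter (fun z => f z = 0), (p z : ℂ) • ρ z)
      - ∑ z ∈ Finset.univ.filter (fun z => f z = 1), (p z : ℂ) • ρ z with hAdef
  -- A as a single signed sum
  have hAsum : A = ∑ z, ((ε z * p z : ℝ) : ℂ) • ρ z := by
    rw [hAdef, Finset.sum_filter, Finset.sum_filter, ← Finset.sum_sub_distrib]
    refine Finset.sum_congr rfl fun z _ => ?_
    rcases hzm (f z) with h | h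
    · simp [hε, h, h10]
    · simp [hε, h, h10, Complex.ofReal_mul]
  -- the value of each pgm trace term
  have hpgm : ∀ z z', ((pgm p ρ hpos z' * ρ z).trace).re
      = p z' * ((S * ρ z' * S * ρ z).trace).re := by
    intro z z'
    rw [pgm, ← hSdef]
    simp [Matrix.smul_mul, Complex.mul_re]
  -- per-z difference of filtered sums
  have hstep : ∀ z,
      ((∑ z' ∈ Finset.univ.filter (fun z' => f z' = f z),
          ((pgm p ρ hpos z' * ρ z).trace).re)
        - ∑ z' ∈ Finset.univ.filter (fun z' => f z' ≠ f z),
          ((pgm p ρ hpos z' * ρ z).trace).re)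
      = ∑ z', (ε z * ε z') * (p z' * ((S * ρ z' * S * ρ z).trace).re) := by
    intro z
    rw [Finset.sum_filter, Finset.sum_filter, ← Finset.sum_sub_distrib]
    refine Finset.sum_congr rfl fun z' _ => ?_
    rw [hpgm]
    by_cases h : f z' = f z
    · have : ε z * ε z' = 1 := by
        rcases hzm (f z) with h0 | h0 <;> simp [hε, h, h0, h10]
      simp [h, this]
    · have : ε z * ε z' = -1 := by
        rcases hzm (f z) with h0 | h0 <;> rcases hzm (f z') with h1 | h1 <;>
          first
            | exact absurd (h1.trans h0.symm) h
            | simp [hε, h0, h1, h10]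
      simp [h, this]
  -- main equality
  have main :
      (∑ z, p z * ∑ z' ∈ Finset.univ.filter (fun z' => f z' = f z),
          ((pgm p ρ hpos z' * ρ z).trace).re)
        - (∑ z, p z * ∑ z' ∈ Finset.univ.filter (fun z' => f z' ≠ f z),
          ((pgm p ρ hpos z' * ρ z).trace).re)
      = ((S * A * S * A).trace).re := by
    rw [← Finset.sum_sub_distrib]
    simp_rw [← mul_sub, hstep]
    rw [hAsum, expand_trace]
    refine Finset.sum_congr rfl fun z _ => ?_
    rw [Finset.mul_sum]
    refine Finset.sum_congr rfl fun z' _ => ?_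
    ring
  -- nonnegativity
  have hherm : ∀ z, (ρ z)ᴴ = ρ z := fun z => (hρ z).1.1
  have hSpsd : S.PosSemidef := hpos.posSemidef.posSemidef_sqrt.inv
  set T : Matrix (Fin D) (Fin D) ℂ := hSpsd.sqrt with hTdef
  have hTT : T * T = S := hSpsd.sqrt_mul_self
  have hTH : Tᴴ = T := hSpsd.posSemidef_sqrt.1
  have hAH : Aᴴ = A := by
    rw [hAsum]
    simp [conjTranspose_sum, conjTranspose_smul, Complex.star_def, Complex.conj_ofReal, hherm]
  have hCH : (T * A * T)ᴴ = T * A * T := by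
    simp [conjTranspose_mul, hTH, hAH, Matrix.mul_assoc]
  have htr : (S * A * S * A).trace = ((T * A * T)ᴴ * (T * A * T)).trace := by
    rw [hCH, ← hTT]
    have e1 : T * T * A * (T * T) * A = T * ((T * A * T) * (T * A)) := by
      simp only [Matrix.mul_assoc]
    rw [e1, Matrix.trace_mul_comm]
    simp only [Matrix.mul_assoc]
  have hnn : 0 ≤ ((S * A * S * A).trace).re := by
    rw [htr]; exact re_trace_ctm_nonneg _
  exact ⟨main, main ▸ hnn⟩
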